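/- Key logarithmic edge-length estimate: for all integers d ≥ 2, n ≥ 3 and m ≥ 2, for every v ∈ ℝ_*^{d×n}, every h ∈ (ℝ^d)^n, and every i ∈ ℤ/nℤ, one has |⟨e_i(v), h_{i+1} − h_i⟩| / |e_i(v)|² ≤ 2^{−(m−1)} · √(g^m_v(h,h)). Equivalently, along any differentiable curve t ↦ v(t) in ℝ_*^{d×n} with v(0) = v and v′(0) = h, the derivative of t ↦ log|e_i(v(t))| at t = 0 is bounded in absolute value by 2^{−(m−1)} √(g^m_v(h,h)). -/

import Mathlib

open scoped InnerProductSpace BigOperators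
open MeasureTheory Filter Topology

noncomputable section

/-- Euclidean space ℝ^d. -/
abbrev Vec (d : ℕ) := EuclideanSpace ℝ (Fin d)

variable {d n : ℕ}

/-- Edges of the discrete closed curve: `e i (v) = v (i+1) - v i`. -/
def edge (v : ZMod n → Vec d) (i : ZMod n) : Vec d := v (i + 1) - v i

/-- Discrete regularity: adjacent vertices are distinct. -/
def IsReg (v : ZMod n → Vec d) : Prop := ∀ i, v i ≠ v (i + 1)

/-- Total length of the discrete curve. -/
def len [NeZero n] (v : ZMod n → Vec d) : ℝ := ∑ i, ‖edge v i‖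

/-- Discrete arc-length derivative of order `m`: odd orders use forward differences
divided by `|e_i|`, even (positive) orders use backward differences divided by the
averaged edge length. -/
def Ds (v h : ZMod n → Vec d) : ℕ → ZMod n → Vec d
  | 0 => h
  | (m + 1) => fun i =>
    if (m + 1) % 2 = 1 then
      (‖edge v i‖)⁻¹ • (Ds v h m (i + 1) - Ds v h m i)
    else
      ((‖edge v i‖ + ‖edge v (i - 1)‖) / 2)⁻¹ • (Ds v h m i - Ds v h m (i - 1))

/-- The weights μ_i in the higher-order term. -/
def mu (v : ZMod n → Vec d) (m : ℕ) (i : ZMod n) : ℝ :=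
  if m % 2 = 1 then ‖edge v i‖ else (‖edge v i‖ + ‖edge v (i - 1)‖) / 2

/-- The discrete Sobolev-type metric of order `m`. -/
def gMet [NeZero n] (m : ℕ) (v h k : ZMod n → Vec d) : ℝ :=
  ∑ i, (⟪h i, k i⟫_ℝ / len v ^ 3 * ((‖edge v i‖ + ‖edge v (i - 1)‖) / 2)
    + ⟪Ds v h m i, Ds v k m i⟫_ℝ / len v ^ ((3 : ℤ) - 2 * (m : ℤ)) * mu v m i)

lemma Ds_succ (v h : ZMod n → Vec d) (m : ℕ) (i : ZMod n) :
    Ds v h (m+1) i = if (m + 1) % 2 = 1 then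
      (‖edge v i‖)⁻¹ • (Ds v h m (i + 1) - Ds v h m i)
    else
      ((‖edge v i‖ + ‖edge v (i - 1)‖) / 2)⁻¹ • (Ds v h m i - Ds v h m (i - 1)) := rfl

lemma edge_pos {v : ZMod n → Vec d} (hv : IsReg v) (i : ZMod n) : 0 < ‖edge v i‖ := by
  rw [norm_pos_iff]
  exact sub_ne_zero_of_ne (Ne.symm (hv i))

lemma mu_pos {v : ZMod n → Vec d} (hv : IsReg v) (m : ℕ) (i : ZMod n) : 0 < mu v m i := by
  unfold mu
  split
  · exact edge_pos hv i
  · exact div_pos (add_pos (edge_pos hv i) (edge_pos hv _)) two_pos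

lemma len_pos [NeZero n] {v : ZMod n → Vec d} (hv : IsReg v) : 0 < len v :=
  Finset.sum_pos (fun i _ => edge_pos hv i) Finset.univ_nonempty

lemma sum_mu [NeZero n] (v : ZMod n → Vec d) (m : ℕ) : ∑ i, mu v m i = len v := by
  unfold mu len
  split
  · rfl
  · have : ∑ i : ZMod n, ‖edge v (i - 1)‖ = ∑ i : ZMod n, ‖edge v i‖ :=
      Fintype.sum_equiv (Equiv.subRight (1 : ZMod n)) _ _ (fun i => rfl)
    rw [← Finset.sum_div, Finset.sum_add_distrib, this]
    ring

lemma mu_smul_Ds {v : ZMod n → Vec d} (hv : IsReg v) (h : ZMod n → Vec d) (m : ℕ) (i : ZMod n) :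
    mu v (m+1) i • Ds v h (m+1) i =
      if (m + 1) % 2 = 1 then Ds v h m (i + 1) - Ds v h m i
      else Ds v h m i - Ds v h m (i - 1) := by
  rw [Ds_succ, mu]
  split
  · exact smul_inv_smul₀ (ne_of_gt (edge_pos hv i)) _
  · exact smul_inv_smul₀ (ne_of_gt (div_pos (add_pos (edge_pos hv i) (edge_pos hv _)) two_pos)) _

lemma sum_mu_smul_Ds [NeZero n] {v : ZMod n → Vec d} (hv : IsReg v) (h : ZMod n → Vec d)
    (m : ℕ) : ∑ i, mu v (m+1) i • Ds v h (m+1) i = 0 := by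
  rw [Finset.sum_congr rfl (fun i _ => mu_smul_Ds hv h m i)]
  have h1 : ∑ i : ZMod n, Ds v h m (i + 1) = ∑ i : ZMod n, Ds v h m i :=
    Fintype.sum_equiv (Equiv.addRight (1 : ZMod n)) _ _ (fun i => rfl)
  have h2 : ∑ i : ZMod n, Ds v h m (i - 1) = ∑ i : ZMod n, Ds v h m i :=
    Fintype.sum_equiv (Equiv.subRight (1 : ZMod n)) _ _ (fun i => rfl)
  split
  · rw [Finset.sum_sub_distrib, h1, sub_self]
  · rw [Finset.sum_sub_distrib, h2, sub_self]

lemma sum_shift [NeZero n] (g : ZMod n → ℝ) (i : ZMod n) :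
    ∑ s ∈ Finset.range n, g (i + (s : ZMod n)) = ∑ k, g k := by
  apply Finset.sum_nbij' (fun (s : ℕ) => i + (s : ZMod n)) (fun k => (k - i).val)
  · intros; exact Finset.mem_univ _
  · intro k _; exact Finset.mem_range.mpr (ZMod.val_lt _)
  · intro a ha
    rw [Finset.mem_range] at ha
    rw [add_sub_cancel_left, ZMod.val_cast_of_lt ha]
  · intro k _
    rw [ZMod.natCast_rightInverse (k - i)]; ring
  · intros; rfl

lemma half_cycle [NeZero n] (f : ZMod n → Vec d) (i j : ZMod n) :
    ‖f j - f i‖ ≤ (∑ k, ‖f (k + 1) - f k‖) / 2 := by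
  set F : ℕ → Vec d := fun s => f (i + (s : ℕ) : ZMod n) with hF
  set t := (j - i).val with ht
  have htn : t ≤ n := le_of_lt (ZMod.val_lt _)
  have hij : i + ((t : ℕ) : ZMod n) = j := by
    rw [ht, ZMod.natCast_rightInverse (j - i)]; ring
  have hj : F t = f j := congrArg f hij
  have hF0 : F 0 = f i := by simp [hF]
  have hFn : F n = f i := by simp [hF, ZMod.natCast_self]
  have h1 : ‖F t - F 0‖ ≤ ∑ s ∈ Finset.range t, ‖F (s+1) - F s‖ := by
    rw [← Finset.sum_range_sub F t]
    exact norm_sum_le _ _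
  have h2 : ‖F n - F t‖ ≤ ∑ s ∈ Finset.Ico t n, ‖F (s+1) - F s‖ := by
    have e : ∑ s ∈ Finset.Ico t n, (F (s+1) - F s) = F n - F t := by
      rw [Finset.sum_Ico_eq_sub _ htn, Finset.sum_range_sub, Finset.sum_range_sub]
      abel
    rw [← e]
    exact norm_sum_le _ _
  have hsplit : (∑ s ∈ Finset.range t, ‖F (s+1) - F s‖)
      + ∑ s ∈ Finset.Ico t n, ‖F (s+1) - F s‖ = ∑ s ∈ Finset.range n, ‖F (s+1) - F s‖ := by
    rw [Finset.range_eq_Ico, Finset.range_eq_Ico]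
    exact Finset.sum_Ico_consecutive (fun s => ‖F (s+1) - F s‖) (Nat.zero_le t) htn
  have hS : ∑ s ∈ Finset.range n, ‖F (s+1) - F s‖ = ∑ k, ‖f (k + 1) - f k‖ := by
    rw [← sum_shift (fun k => ‖f (k + 1) - f k‖) i]
    refine Finset.sum_congr rfl fun s _ => ?_
    have e : i + (((s+1) : ℕ) : ZMod n) = (i + (s : ZMod n)) + 1 := by push_cast; ring
    show ‖F (s+1) - F s‖ = ‖f (i + (s : ZMod n) + 1) - f (i + (s : ZMod n))‖
    rw [hF]
    simp only []
    rw [e]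
  have e1 : ‖f j - f i‖ = ‖F t - F 0‖ := by rw [hj, hF0]
  have e2 : ‖f j - f i‖ = ‖F n - F t‖ := by rw [hj, hFn, norm_sub_rev]
  linarith

lemma diff_sum [NeZero n] {v : ZMod n → Vec d} (hv : IsReg v) (h : ZMod n → Vec d) (m : ℕ) :
    ∑ k, ‖Ds v h m (k + 1) - Ds v h m k‖ = ∑ k, mu v (m+1) k * ‖Ds v h (m+1) k‖ := by
  have key : ∀ k, ‖(if (m + 1) % 2 = 1 then Ds v h m (k + 1) - Ds v h m k
      else Ds v h m k - Ds v h m (k - 1))‖ = mu v (m+1) k * ‖Ds v h (m+1) k‖ := by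
    intro k
    rw [← mu_smul_Ds hv h m k, norm_smul, Real.norm_of_nonneg (le_of_lt (mu_pos hv _ k))]
  by_cases hp : (m + 1) % 2 = 1
  · refine Finset.sum_congr rfl fun k _ => ?_
    have := key k
    rwa [if_pos hp] at this
  · have h2 : ∑ k : ZMod n, ‖Ds v h m (k + 1) - Ds v h m k‖
        = ∑ k : ZMod n, ‖Ds v h m k - Ds v h m (k - 1)‖ := by
      refine (Fintype.sum_equiv (Equiv.subRight (1 : ZMod n)) _ _ fun k => ?_).symm
      simp only [Equiv.subRight_apply]
      rw [sub_add_cancel]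
    rw [h2]
    refine Finset.sum_congr rfl fun k _ => ?_
    have := key k
    rwa [if_neg hp] at this

lemma sup_bound [NeZero n] {v : ZMod n → Vec d} (hv : IsReg v) (h : ZMod n → Vec d)
    (m : ℕ) (j : ZMod n) :
    ‖Ds v h (m+1) j‖ ≤ (∑ k, mu v (m+2) k * ‖Ds v h (m+2) k‖) / 2 := by
  have hL := len_pos hv
  have key : (len v) • Ds v h (m+1) j
      = ∑ i, mu v (m+1) i • (Ds v h (m+1) j - Ds v h (m+1) i) := by
    have : ∀ i : ZMod n, mu v (m+1) i • (Ds v h (m+1) j - Ds v h (m+1) i)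
        = mu v (m+1) i • Ds v h (m+1) j - mu v (m+1) i • Ds v h (m+1) i :=
      fun i => smul_sub _ _ _
    rw [Finset.sum_congr rfl fun i _ => this i, Finset.sum_sub_distrib,
      sum_mu_smul_Ds hv h m, sub_zero, ← Finset.sum_smul, sum_mu]
  have hnorm : len v * ‖Ds v h (m+1) j‖
      ≤ ∑ i, mu v (m+1) i * ((∑ k, ‖Ds v h (m+1) (k+1) - Ds v h (m+1) k‖) / 2) := by
    calc len v * ‖Ds v h (m+1) j‖ = ‖(len v) • Ds v h (m+1) j‖ := by
          rw [norm_smul, Real.norm_of_nonneg (le_of_lt hL)]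
      _ = ‖∑ i, mu v (m+1) i • (Ds v h (m+1) j - Ds v h (m+1) i)‖ := by rw [key]
      _ ≤ ∑ i, ‖mu v (m+1) i • (Ds v h (m+1) j - Ds v h (m+1) i)‖ := norm_sum_le _ _
      _ = ∑ i, mu v (m+1) i * ‖Ds v h (m+1) j - Ds v h (m+1) i‖ := by
          refine Finset.sum_congr rfl fun i _ => ?_
          rw [norm_smul, Real.norm_of_nonneg (le_of_lt (mu_pos hv _ i))]
      _ ≤ _ := by
          refine Finset.sum_le_sum fun i _ => ?_
          exact mul_le_mul_of_nonneg_left (half_cycle (Ds v h (m+1)) i j)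
            (le_of_lt (mu_pos hv _ i))
  rw [← Finset.sum_mul, sum_mu, diff_sum hv h (m+1)] at hnorm
  have := (mul_le_mul_iff_right₀ hL).mp hnorm
  linarith

lemma iter_bound [NeZero n] {v : ZMod n → Vec d} (hv : IsReg v) (h : ZMod n → Vec d)
    (r : ℕ) (j : ZMod n) :
    ‖Ds v h 1 j‖ ≤ (1/2)^(r+1) * len v ^ r * ∑ k, mu v (r+2) k * ‖Ds v h (r+2) k‖ := by
  induction r with
  | zero =>
    have h0 := sup_bound hv h 0 j
    simp only [pow_one, pow_zero, mul_one, zero_add]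
    linarith
  | succ r ih =>
    have step : ∑ k, mu v (r+2) k * ‖Ds v h (r+2) k‖
        ≤ len v * ((∑ k, mu v (r+3) k * ‖Ds v h (r+3) k‖) / 2) := by
      calc ∑ k, mu v (r+2) k * ‖Ds v h (r+2) k‖
          ≤ ∑ k, mu v (r+2) k * ((∑ k', mu v (r+3) k' * ‖Ds v h (r+3) k'‖) / 2) := by
            refine Finset.sum_le_sum fun k _ => ?_
            exact mul_le_mul_of_nonneg_left (sup_bound hv h (r+1) k)
              (le_of_lt (mu_pos hv _ k))
        _ = len v * ((∑ k, mu v (r+3) k * ‖Ds v h (r+3) k‖) / 2) := by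
            rw [← Finset.sum_mul, sum_mu]
    have hL := len_pos hv
    have hc : (0:ℝ) ≤ (1/2)^(r+1) * len v ^ r := by positivity
    calc ‖Ds v h 1 j‖ ≤ (1/2)^(r+1) * len v ^ r * ∑ k, mu v (r+2) k * ‖Ds v h (r+2) k‖ := ih
      _ ≤ (1/2)^(r+1) * len v ^ r
          * (len v * ((∑ k, mu v (r+3) k * ‖Ds v h (r+3) k‖) / 2)) :=
            mul_le_mul_of_nonneg_left step hc
      _ = (1/2)^(r+2) * len v ^ (r+1) * ∑ k, mu v (r+3) k * ‖Ds v h (r+3) k‖ := by ring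

/-- key logarithmic edge-length estimate: for `m ≥ 2`,
`|⟨e_i(v), h_{i+1} - h_i⟩| / |e_i(v)|² ≤ 2^{-(m-1)} √(g^m_v(h,h))`, i.e. the derivative
of `log |e_i|` along any curve through `v` with velocity `h` is bounded by
`2^{-(m-1)} √(g^m_v(h,h))`. -/
theorem log_edge_deriv_bound (d n m : ℕ) (hd : 2 ≤ d) (hn : 3 ≤ n) [NeZero n]
    (hm : 2 ≤ m) (v : ZMod n → Vec d) (hv : IsReg v) (h : ZMod n → Vec d) (i : ZMod n) :
    |⟪edge v i, h (i + 1) - h i⟫_ℝ| / ‖edge v i‖ ^ 2 ≤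
      Real.sqrt (gMet m v h h) / 2 ^ (m - 1) := by
  obtain ⟨r, rfl⟩ : ∃ r, m = r + 2 := ⟨m - 2, by omega⟩
  have he := edge_pos hv i
  have hL := len_pos hv
  set L := len v with hLdef
  set zz : ℤ := (3 : ℤ) - 2 * ((r + 2 : ℕ) : ℤ) with hzz
  have hzpos : (0:ℝ) < L ^ zz := zpow_pos hL _
  -- Step A
  have hDs1 : Ds v h 1 i = (‖edge v i‖)⁻¹ • (h (i+1) - h i) := by
    show Ds v h (0+1) i = _
    rw [Ds_succ]
    norm_num
    rfl
  have hA : |⟪edge v i, h (i + 1) - h i⟫_ℝ| / ‖edge v i‖ ^ 2 ≤ ‖Ds v h 1 i‖ := by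
    rw [hDs1, norm_smul, norm_inv, Real.norm_of_nonneg he.le, div_le_iff₀ (by positivity)]
    calc |⟪edge v i, h (i + 1) - h i⟫_ℝ| ≤ ‖edge v i‖ * ‖h (i+1) - h i‖ :=
          abs_real_inner_le_norm _ _
      _ = ‖edge v i‖⁻¹ * ‖h (i+1) - h i‖ * ‖edge v i‖ ^ 2 := by
          field_simp
  -- the key sums
  set T := ∑ k, mu v (r+2) k * ‖Ds v h (r+2) k‖ with hT
  set Q := ∑ k, mu v (r+2) k * ‖Ds v h (r+2) k‖ ^ 2 with hQ
  set G := gMet (r+2) v h h with hG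
  have hTnn : 0 ≤ T :=
    Finset.sum_nonneg fun k _ => mul_nonneg (mu_pos hv _ k).le (norm_nonneg _)
  have hQnn : 0 ≤ Q :=
    Finset.sum_nonneg fun k _ => mul_nonneg (mu_pos hv _ k).le (sq_nonneg _)
  -- Step C : Q ≤ L^zz * G
  have hC : Q ≤ L ^ zz * G := by
    have hterm : ∀ k : ZMod n, mu v (r+2) k * ‖Ds v h (r+2) k‖ ^ 2
        = L ^ zz * (⟪Ds v h (r+2) k, Ds v h (r+2) k⟫_ℝ / L ^ zz * mu v (r+2) k) := by
      intro k
      rw [real_inner_self_eq_norm_sq]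
      field_simp
    rw [hQ, Finset.sum_congr rfl fun k _ => hterm k, ← Finset.mul_sum]
    refine mul_le_mul_of_nonneg_left ?_ hzpos.le
    rw [hG, gMet]
    refine Finset.sum_le_sum fun k _ => le_add_of_nonneg_left ?_
    have h1 : (0:ℝ) ≤ ⟪h k, h k⟫_ℝ := real_inner_self_nonneg
    have h2 : (0:ℝ) < (‖edge v k‖ + ‖edge v (k-1)‖) / 2 :=
      div_pos (add_pos (edge_pos hv k) (edge_pos hv _)) two_pos
    have h3 : (0:ℝ) < L ^ 3 := by positivity
    positivity
  have hGnn : 0 ≤ G := by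
    by_contra hcon
    push_neg at hcon
    nlinarith
  -- Step B : T ≤ √L * √Q
  have hB : T ≤ Real.sqrt L * Real.sqrt Q := by
    have hcs := Finset.sum_mul_sq_le_sq_mul_sq Finset.univ
      (fun k => Real.sqrt (mu v (r+2) k))
      (fun k => Real.sqrt (mu v (r+2) k) * ‖Ds v h (r+2) k‖)
    have e1 : ∀ k : ZMod n, Real.sqrt (mu v (r+2) k)
        * (Real.sqrt (mu v (r+2) k) * ‖Ds v h (r+2) k‖) = mu v (r+2) k * ‖Ds v h (r+2) k‖ := by
      intro k
      rw [← mul_assoc, Real.mul_self_sqrt (mu_pos hv _ k).le]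
    have e2 : ∀ k : ZMod n, (Real.sqrt (mu v (r+2) k)) ^ 2 = mu v (r+2) k :=
      fun k => Real.sq_sqrt (mu_pos hv _ k).le
    have e3 : ∀ k : ZMod n, (Real.sqrt (mu v (r+2) k) * ‖Ds v h (r+2) k‖) ^ 2
        = mu v (r+2) k * ‖Ds v h (r+2) k‖ ^ 2 := by
      intro k
      rw [mul_pow, e2]
    rw [Finset.sum_congr rfl fun k _ => e1 k,
      Finset.sum_congr rfl fun k _ => e2 k,
      Finset.sum_congr rfl fun k _ => e3 k, sum_mu] at hcs
    have : T ≤ Real.sqrt (L * Q) :=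
      (Real.le_sqrt hTnn (mul_nonneg hL.le hQnn)).mpr hcs
    rwa [Real.sqrt_mul hL.le] at this
  -- Step D : numeric identity
  have hD : L ^ r * (Real.sqrt L * Real.sqrt (L ^ zz)) = 1 := by
    have hz2 : L ^ zz = (L ^ (2*r+1) : ℝ)⁻¹ := by
      rw [hzz, show (3 : ℤ) - 2 * ((r + 2 : ℕ) : ℤ) = -((2*r+1 : ℕ) : ℤ) by push_cast; ring,
        zpow_neg, zpow_natCast]
    have hsq : Real.sqrt (L ^ (2*r+1)) = L ^ r * Real.sqrt L := by
      rw [show L ^ (2*r+1) = (L ^ r) ^ 2 * L by ring, Real.sqrt_mul (sq_nonneg _),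
        Real.sqrt_sq (pow_nonneg hL.le r)]
    rw [hz2, Real.sqrt_inv, hsq]
    have hpos : 0 < L ^ r * Real.sqrt L := by positivity
    field_simp
  -- sqrt monotone chain
  have hQsqrt : Real.sqrt Q ≤ Real.sqrt (L ^ zz) * Real.sqrt G := by
    rw [← Real.sqrt_mul hzpos.le]
    exact Real.sqrt_le_sqrt hC
  have hchain : ‖Ds v h 1 i‖ ≤ (1/2)^(r+1) * (L ^ r * (Real.sqrt L * (Real.sqrt (L ^ zz) * Real.sqrt G))) := by
    calc ‖Ds v h 1 i‖ ≤ (1/2)^(r+1) * L ^ r * T := iter_bound hv h r i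
      _ ≤ (1/2)^(r+1) * L ^ r * (Real.sqrt L * (Real.sqrt (L ^ zz) * Real.sqrt G)) := by
          refine mul_le_mul_of_nonneg_left ?_ (by positivity)
          calc T ≤ Real.sqrt L * Real.sqrt Q := hB
            _ ≤ Real.sqrt L * (Real.sqrt (L ^ zz) * Real.sqrt G) :=
                mul_le_mul_of_nonneg_left hQsqrt (Real.sqrt_nonneg _)
      _ = (1/2)^(r+1) * (L ^ r * (Real.sqrt L * (Real.sqrt (L ^ zz) * Real.sqrt G))) := by ring
  have hfin : ‖Ds v h 1 i‖ ≤ Real.sqrt G / 2 ^ (r+1) := by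
    have : L ^ r * (Real.sqrt L * (Real.sqrt (L ^ zz) * Real.sqrt G))
        = (L ^ r * (Real.sqrt L * Real.sqrt (L ^ zz))) * Real.sqrt G := by ring
    rw [this, hD, one_mul] at hchain
    calc ‖Ds v h 1 i‖ ≤ (1/2)^(r+1) * Real.sqrt G := hchain
      _ = Real.sqrt G / 2 ^ (r+1) := by
        rw [one_div, inv_pow, inv_mul_eq_div]
  have hidx : r + 2 - 1 = r + 1 := rfl
  rw [hidx]
  exact le_trans hA hfin
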